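/- arXiv:1808.05792 — 2 statements merged into one kernel-verified Lean document; each statement's English description precedes it below -/
import Mathlib

section
/- Let C and C̃ be bivariate copulas with conditional copulas C(u₂|u₁) and C̃(u₂|u₁), and suppose C̃ is strictly more SI than C, i.e., the map ψ(u₁,u₂) = C̃⁻¹(C(u₂|u₁)|u₁) is strictly increasing in u₁ (and increasing in u₂). Then C(u₁,u₂) < C̃(u₁,u₂) for all (u₁,u₂) ∈ (0,1)². -/
open Set Filter Topology

/-- A bivariate copula: boundary conditions and 2-increasingness. -/
def IsCopula (C : ℝ → ℝ → ℝ) : Prop :=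
  (∀ u ∈ Set.Icc (0:ℝ) 1, C u 0 = 0 ∧ C 0 u = 0 ∧ C u 1 = u ∧ C 1 u = u) ∧
  (∀ u₁ u₂ v₁ v₂ : ℝ, u₁ ∈ Set.Icc (0:ℝ) 1 → u₂ ∈ Set.Icc (0:ℝ) 1 →
    v₁ ∈ Set.Icc (0:ℝ) 1 → v₂ ∈ Set.Icc (0:ℝ) 1 → u₁ ≤ u₂ → v₁ ≤ v₂ →
    0 ≤ C u₂ v₂ - C u₂ v₁ - C u₁ v₂ + C u₁ v₁)

/-- If `C̃` is strictly more SI than `C` (i.e. the map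
`ψ(u₁,u₂) = C̃⁻¹(C(u₂|u₁)|u₁)` is strictly increasing in `u₁` and increasing in `u₂`,
where `C(u₂|u₁) = ∂C(u₁,u₂)/∂u₁` is the conditional copula), then
`C(u₁,u₂) < C̃(u₁,u₂)` for all `(u₁,u₂) ∈ (0,1)²`. -/
theorem strictly_more_SI_implies_pointwise_lt
    (C Ct : ℝ → ℝ → ℝ) (hC : IsCopula C) (hCt : IsCopula Ct)
    -- conditional copulas: `c u₁ u₂ = ∂C(u₁,u₂)/∂u₁`, similarly for `ct`
    (c ct : ℝ → ℝ → ℝ)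
    (hc : ∀ u₂ ∈ Set.Ioo (0:ℝ) 1, ∀ u₁ ∈ Set.Ioo (0:ℝ) 1,
      HasDerivAt (fun t => C t u₂) (c u₁ u₂) u₁)
    (hct : ∀ u₂ ∈ Set.Ioo (0:ℝ) 1, ∀ u₁ ∈ Set.Ioo (0:ℝ) 1,
      HasDerivAt (fun t => Ct t u₂) (ct u₁ u₂) u₁)
    -- inverse of the conditional copula `ct` in its second argument
    (ctinv : ℝ → ℝ → ℝ)
    (hinv : ∀ u₁ ∈ Set.Ioo (0:ℝ) 1, ∀ y ∈ Set.Ioo (0:ℝ) 1,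
      ct u₁ (ctinv u₁ y) = y ∧ ctinv u₁ (ct u₁ y) = y)
    (ψ : ℝ → ℝ → ℝ)
    (hψ : ∀ u₁ u₂, ψ u₁ u₂ = ctinv u₁ (c u₁ u₂))
    -- `C̃` strictly more SI than `C`: `ψ` strictly increasing in `u₁`
    (hSI : ∀ u₂ ∈ Set.Ioo (0:ℝ) 1, StrictMonoOn (fun u₁ => ψ u₁ u₂) (Set.Ioo 0 1))
    -- and increasing in `u₂`
    (hmono : ∀ u₁ ∈ Set.Ioo (0:ℝ) 1, MonotoneOn (fun u₂ => ψ u₁ u₂) (Set.Ioo 0 1)) :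
    ∀ u₁ ∈ Set.Ioo (0:ℝ) 1, ∀ u₂ ∈ Set.Ioo (0:ℝ) 1, C u₁ u₂ < Ct u₁ u₂ := by
  obtain ⟨hCb, hC2⟩ := hC
  obtain ⟨hCtb, hCt2⟩ := hCt
  intro u₁ hu₁ u₂ hu₂
  by_contra hcon
  push_neg at hcon
  have hu₂c : u₂ ∈ Icc (0:ℝ) 1 := ⟨hu₂.1.le, hu₂.2.le⟩
  have hC0 : C 0 u₂ = 0 := (hCb u₂ hu₂c).2.1
  have hC1 : C 1 u₂ = u₂ := (hCb u₂ hu₂c).2.2.2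
  have hCt0 : Ct 0 u₂ = 0 := (hCtb u₂ hu₂c).2.1
  have hCt1 : Ct 1 u₂ = u₂ := (hCtb u₂ hu₂c).2.2.2
  -- increments of sections at level u₂ : monotone and 1-Lipschitz
  have hsec : ∀ (D : ℝ → ℝ → ℝ),
      (∀ u ∈ Set.Icc (0:ℝ) 1, D u 0 = 0 ∧ D 0 u = 0 ∧ D u 1 = u ∧ D 1 u = u) →
      (∀ a b v₁ v₂ : ℝ, a ∈ Set.Icc (0:ℝ) 1 → b ∈ Set.Icc (0:ℝ) 1 →
        v₁ ∈ Set.Icc (0:ℝ) 1 → v₂ ∈ Set.Icc (0:ℝ) 1 → a ≤ b → v₁ ≤ v₂ →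
        0 ≤ D b v₂ - D b v₁ - D a v₂ + D a v₁) →
      ∀ a b : ℝ, a ∈ Icc (0:ℝ) 1 → b ∈ Icc (0:ℝ) 1 → a ≤ b →
        0 ≤ D b u₂ - D a u₂ ∧ D b u₂ - D a u₂ ≤ b - a := by
    intro D hDb hD2 a b ha hb hab
    have h0 : (0:ℝ) ∈ Icc (0:ℝ) 1 := ⟨le_refl 0, zero_le_one⟩
    have h1 : (1:ℝ) ∈ Icc (0:ℝ) 1 := ⟨zero_le_one, le_refl 1⟩
    have hm := hD2 a b 0 u₂ ha hb h0 hu₂c hab hu₂.1.le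
    have hl := hD2 a b u₂ 1 ha hb hu₂c h1 hab hu₂.2.le
    have hDa0 : D a 0 = 0 := (hDb a ha).1
    have hDb0 : D b 0 = 0 := (hDb b hb).1
    have hDa1 : D a 1 = a := (hDb a ha).2.2.1
    have hDb1 : D b 1 = b := (hDb b hb).2.2.1
    rw [hDa0, hDb0] at hm
    rw [hDa1, hDb1] at hl
    exact ⟨by linarith, by linarith⟩
  have hsecC := hsec C hCb hC2
  have hsecCt := hsec Ct hCtb hCt2
  -- general first-variable increment bounds at an arbitrary level
  have hsecg : ∀ (D : ℝ → ℝ → ℝ),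
      (∀ u ∈ Set.Icc (0:ℝ) 1, D u 0 = 0 ∧ D 0 u = 0 ∧ D u 1 = u ∧ D 1 u = u) →
      (∀ a b v₁ v₂ : ℝ, a ∈ Set.Icc (0:ℝ) 1 → b ∈ Set.Icc (0:ℝ) 1 →
        v₁ ∈ Set.Icc (0:ℝ) 1 → v₂ ∈ Set.Icc (0:ℝ) 1 → a ≤ b → v₁ ≤ v₂ →
        0 ≤ D b v₂ - D b v₁ - D a v₂ + D a v₁) →
      ∀ v, v ∈ Icc (0:ℝ) 1 → ∀ a b : ℝ, a ∈ Icc (0:ℝ) 1 → b ∈ Icc (0:ℝ) 1 → a ≤ b →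
        0 ≤ D b v - D a v ∧ D b v - D a v ≤ b - a := by
    intro D hDb hD2 v hv a b ha hb hab
    have h0 : (0:ℝ) ∈ Icc (0:ℝ) 1 := ⟨le_refl 0, zero_le_one⟩
    have h1 : (1:ℝ) ∈ Icc (0:ℝ) 1 := ⟨zero_le_one, le_refl 1⟩
    have hm := hD2 a b 0 v ha hb h0 hv hab hv.1
    have hl := hD2 a b v 1 ha hb hv h1 hab hv.2
    have hDa0 : D a 0 = 0 := (hDb a ha).1
    have hDb0 : D b 0 = 0 := (hDb b hb).1
    have hDa1 : D a 1 = a := (hDb a ha).2.2.1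
    have hDb1 : D b 1 = b := (hDb b hb).2.2.1
    rw [hDa0, hDb0] at hm
    rw [hDa1, hDb1] at hl
    exact ⟨by linarith, by linarith⟩
  -- second-variable increment bounds
  have vsecg : ∀ (D : ℝ → ℝ → ℝ),
      (∀ u ∈ Set.Icc (0:ℝ) 1, D u 0 = 0 ∧ D 0 u = 0 ∧ D u 1 = u ∧ D 1 u = u) →
      (∀ a b v₁ v₂ : ℝ, a ∈ Set.Icc (0:ℝ) 1 → b ∈ Set.Icc (0:ℝ) 1 →
        v₁ ∈ Set.Icc (0:ℝ) 1 → v₂ ∈ Set.Icc (0:ℝ) 1 → a ≤ b → v₁ ≤ v₂ →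
        0 ≤ D b v₂ - D b v₁ - D a v₂ + D a v₁) →
      ∀ t, t ∈ Icc (0:ℝ) 1 → ∀ y z : ℝ, y ∈ Icc (0:ℝ) 1 → z ∈ Icc (0:ℝ) 1 → y ≤ z →
        0 ≤ D t z - D t y ∧ D t z - D t y ≤ z - y := by
    intro D hDb hD2 t ht y z hy hz hyz
    have h0 : (0:ℝ) ∈ Icc (0:ℝ) 1 := ⟨le_refl 0, zero_le_one⟩
    have h1 : (1:ℝ) ∈ Icc (0:ℝ) 1 := ⟨zero_le_one, le_refl 1⟩
    have hm := hD2 0 t y z h0 ht hy hz ht.1 hyz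
    have hl := hD2 t 1 y z ht h1 hy hz ht.2 hyz
    have e1 : D 0 y = 0 := (hDb y hy).2.1
    have e2 : D 0 z = 0 := (hDb z hz).2.1
    have e3 : D 1 y = y := (hDb y hy).2.2.2
    have e4 : D 1 z = z := (hDb z hz).2.2.2
    rw [e1, e2] at hm
    rw [e3, e4] at hl
    exact ⟨by linarith, by linarith⟩
  -- derivative of a monotone 1-Lipschitz function lies in [0,1]
  have slopeBound : ∀ (F : ℝ → ℝ) (d x : ℝ), x ∈ Ioo (0:ℝ) 1 → HasDerivAt F d x →
      (∀ a b : ℝ, a ∈ Icc (0:ℝ) 1 → b ∈ Icc (0:ℝ) 1 → a ≤ b →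
        0 ≤ F b - F a ∧ F b - F a ≤ b - a) → 0 ≤ d ∧ d ≤ 1 := by
    intro F d x hx hF hbnd
    have hT : Tendsto (slope F x) (𝓝[>] x) (𝓝 d) :=
      (hasDerivAt_iff_tendsto_slope.1 hF).mono_left
        (nhdsWithin_mono x (fun y hy => Set.mem_compl_singleton_iff.mpr (ne_of_gt hy)))
    have hev : ∀ᶠ y in 𝓝[>] x, slope F x y ∈ Icc (0:ℝ) 1 := by
      filter_upwards [Ioo_mem_nhdsGT_of_mem (⟨le_refl x, hx.2⟩ : x ∈ Ico x 1)] with y hy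
      have hxy : (0:ℝ) < y - x := by linarith [hy.1]
      have hb := hbnd x y ⟨hx.1.le, hx.2.le⟩ ⟨(hx.1.trans hy.1).le, hy.2.le⟩ hy.1.le
      rw [slope_def_field]
      constructor
      · exact div_nonneg hb.1 hxy.le
      · rw [div_le_one hxy]; linarith [hb.2]
    constructor
    · exact ge_of_tendsto hT (hev.mono fun y hy => hy.1)
    · exact le_of_tendsto hT (hev.mono fun y hy => hy.2)
  -- bounds for the conditional copulas
  have cbnd : ∀ t ∈ Ioo (0:ℝ) 1, 0 ≤ c t u₂ ∧ c t u₂ ≤ 1 :=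
    fun t ht => slopeBound _ _ t ht (hc u₂ hu₂ t ht) (fun a b ha hb hab => hsecC a b ha hb hab)
  have ctbnd : ∀ v ∈ Ioo (0:ℝ) 1, ∀ t ∈ Ioo (0:ℝ) 1, 0 ≤ ct t v ∧ ct t v ≤ 1 :=
    fun v hv t ht => slopeBound _ _ t ht (hct v hv t ht)
      (fun a b ha hb hab => hsecg Ct hCtb hCt2 v ⟨hv.1.le, hv.2.le⟩ a b ha hb hab)
  -- ct is monotone and strictly monotone in its second variable
  have ctmono : ∀ t ∈ Ioo (0:ℝ) 1, ∀ y z : ℝ, y ∈ Ioo (0:ℝ) 1 → z ∈ Ioo (0:ℝ) 1 → y ≤ z →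
      ct t y ≤ ct t z := by
    intro t ht y z hy hz hyz
    have hF : HasDerivAt (fun s => Ct s z - Ct s y) (ct t z - ct t y) t :=
      (hct z hz t ht).sub (hct y hy t ht)
    have hbnd2 : ∀ a b : ℝ, a ∈ Icc (0:ℝ) 1 → b ∈ Icc (0:ℝ) 1 → a ≤ b →
        0 ≤ (Ct b z - Ct b y) - (Ct a z - Ct a y) ∧
          (Ct b z - Ct b y) - (Ct a z - Ct a y) ≤ b - a := by
      intro a b ha hb hab
      have h0 : (0:ℝ) ∈ Icc (0:ℝ) 1 := ⟨le_refl 0, zero_le_one⟩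
      have h1 : (1:ℝ) ∈ Icc (0:ℝ) 1 := ⟨zero_le_one, le_refl 1⟩
      have hyc : y ∈ Icc (0:ℝ) 1 := ⟨hy.1.le, hy.2.le⟩
      have hzc : z ∈ Icc (0:ℝ) 1 := ⟨hz.1.le, hz.2.le⟩
      have hq1 := hCt2 a b y z ha hb hyc hzc hab hyz
      have hq2 := hCt2 a b 0 y ha hb h0 hyc hab hy.1.le
      have hq3 := hCt2 a b z 1 ha hb hzc h1 hab hz.2.le
      have e1 : Ct a 0 = 0 := (hCtb a ha).1
      have e2 : Ct b 0 = 0 := (hCtb b hb).1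
      have e3 : Ct a 1 = a := (hCtb a ha).2.2.1
      have e4 : Ct b 1 = b := (hCtb b hb).2.2.1
      rw [e1, e2] at hq2
      rw [e3, e4] at hq3
      exact ⟨by linarith, by linarith⟩
    have := slopeBound _ _ t ht hF hbnd2
    linarith [this.1]
  have ctstrict : ∀ t ∈ Ioo (0:ℝ) 1, ∀ y z : ℝ, y ∈ Ioo (0:ℝ) 1 → z ∈ Ioo (0:ℝ) 1 → y < z →
      ct t y < ct t z := by
    intro t ht y z hy hz hyz
    rcases lt_or_eq_of_le (ctmono t ht y z hy hz hyz.le) with h | h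
    · exact h
    · exfalso
      have h1 := (hinv t ht y hy).2
      have h2 := (hinv t ht z hz).2
      rw [h] at h1
      exact absurd (h1.symm.trans h2) (ne_of_lt hyz)
  have ctIoo : ∀ v ∈ Ioo (0:ℝ) 1, ∀ t ∈ Ioo (0:ℝ) 1, 0 < ct t v ∧ ct t v < 1 := by
    intro v hv t ht
    have hv2 : v/2 ∈ Ioo (0:ℝ) 1 := ⟨by linarith [hv.1], by linarith [hv.1, hv.2]⟩
    have hv3 : (v+1)/2 ∈ Ioo (0:ℝ) 1 := ⟨by linarith [hv.1], by linarith [hv.2]⟩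
    constructor
    · exact lt_of_le_of_lt (ctbnd (v/2) hv2 t ht).1
        (ctstrict t ht (v/2) v hv2 hv (by linarith [hv.1]))
    · exact lt_of_lt_of_le (ctstrict t ht v ((v+1)/2) hv hv3 (by linarith [hv.2]))
        (ctbnd _ hv3 t ht).2
  -- continuity of sections
  have contsec : ∀ (D : ℝ → ℝ → ℝ),
      (∀ a b : ℝ, a ∈ Icc (0:ℝ) 1 → b ∈ Icc (0:ℝ) 1 → a ≤ b →
        0 ≤ D b u₂ - D a u₂ ∧ D b u₂ - D a u₂ ≤ b - a) →
      ContinuousOn (fun t => D t u₂) (Icc (0:ℝ) 1) := by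
    intro D hD
    refine LipschitzOnWith.continuousOn (K := 1) ?_
    rw [lipschitzOnWith_iff_dist_le_mul]
    intro x hx y hy
    rw [Real.dist_eq, Real.dist_eq, NNReal.coe_one, one_mul]
    have key : ∀ p q : ℝ, p ∈ Icc (0:ℝ) 1 → q ∈ Icc (0:ℝ) 1 → p ≤ q →
        |D q u₂ - D p u₂| ≤ |q - p| := by
      intro p q hp hq hpq
      have h := hD p q hp hq hpq
      rw [abs_of_nonneg h.1, abs_of_nonneg (by linarith : (0:ℝ) ≤ q - p)]
      exact h.2
    rcases le_total x y with h | h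
    · have h2 := key x y hx hy h
      rwa [abs_sub_comm (D y u₂), abs_sub_comm y] at h2
    · exact key y x hy hx h
  have contC : ContinuousOn (fun t => C t u₂) (Icc (0:ℝ) 1) := contsec C hsecC
  have contCt : ContinuousOn (fun t => Ct t u₂) (Icc (0:ℝ) 1) := contsec Ct hsecCt
  have contg : ContinuousOn (fun t => C t u₂ - Ct t u₂) (Icc (0:ℝ) 1) := contC.sub contCt
  -- derivative of g
  have gd : ∀ t ∈ Ioo (0:ℝ) 1, HasDerivAt (fun s => C s u₂ - Ct s u₂) (c t u₂ - ct t u₂) t :=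
    fun t ht => (hc u₂ hu₂ t ht).sub (hct u₂ hu₂ t ht)
  -- pinning : a critical point has ψ-value u₂
  have pin : ∀ t ∈ Ioo (0:ℝ) 1, c t u₂ = ct t u₂ → ψ t u₂ = u₂ := by
    intro t ht h
    rw [hψ, h]
    exact (hinv t ht u₂ hu₂).2
  -- uniqueness of critical points
  have uniq : ∀ s ∈ Ioo (0:ℝ) 1, ∀ t ∈ Ioo (0:ℝ) 1,
      c s u₂ = ct s u₂ → c t u₂ = ct t u₂ → s = t := by
    intro s hs t ht h1 h2
    exact (hSI u₂ hu₂).injOn hs ht (by simp only [pin s hs h1, pin t ht h2])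
  -- interior extrema are critical
  have critmax : ∀ t ∈ Ioo (0:ℝ) 1, IsMaxOn (fun s => C s u₂ - Ct s u₂) (Icc (0:ℝ) 1) t →
      c t u₂ = ct t u₂ := by
    intro t ht hmax
    have hloc : IsLocalMax (fun s => C s u₂ - Ct s u₂) t :=
      hmax.isLocalMax (Icc_mem_nhds ht.1 ht.2)
    have := hloc.hasDerivAt_eq_zero (gd t ht)
    linarith [this]
  have critmin : ∀ t ∈ Ioo (0:ℝ) 1, IsMinOn (fun s => C s u₂ - Ct s u₂) (Icc (0:ℝ) 1) t →
      c t u₂ = ct t u₂ := by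
    intro t ht hmin
    have hloc : IsLocalMin (fun s => C s u₂ - Ct s u₂) t :=
      hmin.isLocalMin (Icc_mem_nhds ht.1 ht.2)
    have := hloc.hasDerivAt_eq_zero (gd t ht)
    linarith [this]
  -- extrema exist
  obtain ⟨t₁, ht₁m, ht₁max⟩ := isCompact_Icc.exists_isMaxOn (Set.nonempty_Icc.mpr zero_le_one) contg
  obtain ⟨t₂, ht₂m, ht₂min⟩ := isCompact_Icc.exists_isMinOn (Set.nonempty_Icc.mpr zero_le_one) contg
  have ht₁v := fun (x : ℝ) (hx : x ∈ Icc (0:ℝ) 1) => isMaxOn_iff.mp ht₁max x hx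
  have ht₂v := fun (x : ℝ) (hx : x ∈ Icc (0:ℝ) 1) => isMinOn_iff.mp ht₂min x hx
  have hu₁c : u₁ ∈ Icc (0:ℝ) 1 := ⟨hu₁.1.le, hu₁.2.le⟩
  have hgu₁ : 0 ≤ C u₁ u₂ - Ct u₁ u₂ := by linarith
  have hg0 : C 0 u₂ - Ct 0 u₂ = 0 := by rw [hC0, hCt0]; ring
  have hg1 : C 1 u₂ - Ct 1 u₂ = 0 := by rw [hC1, hCt1]; ring
  have interior : ∀ s ∈ Icc (0:ℝ) 1, C s u₂ - Ct s u₂ ≠ 0 → s ∈ Ioo (0:ℝ) 1 := by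
    intro s hs hne
    constructor
    · rcases eq_or_lt_of_le hs.1 with h | h
      · exact absurd (by rw [← h]; exact hg0) hne
      · exact h
    · rcases eq_or_lt_of_le hs.2 with h | h
      · exact absurd (by rw [h]; exact hg1) hne
      · exact h
  by_cases hneg : C t₂ u₂ - Ct t₂ u₂ < 0
  · -- negative minimum : interior critical point
    have ht₂Ioo : t₂ ∈ Ioo (0:ℝ) 1 := interior t₂ ht₂m (ne_of_lt hneg)
    have hcrit₂ := critmin t₂ ht₂Ioo ht₂min
    by_cases hpos : 0 < C t₁ u₂ - Ct t₁ u₂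
    · have ht₁Ioo : t₁ ∈ Ioo (0:ℝ) 1 := interior t₁ ht₁m (ne_of_gt hpos)
      have hcrit₁ := critmax t₁ ht₁Ioo ht₁max
      have := uniq t₁ ht₁Ioo t₂ ht₂Ioo hcrit₁ hcrit₂
      rw [this] at hpos; linarith
    · -- u₁ is itself a maximum point
      push_neg at hpos
      have humax : IsMaxOn (fun s => C s u₂ - Ct s u₂) (Icc (0:ℝ) 1) u₁ := by
        rw [isMaxOn_iff]
        intro x hx
        have := ht₁v x hx
        linarith
      have hcritu := critmax u₁ hu₁ humax
      have := uniq u₁ hu₁ t₂ ht₂Ioo hcritu hcrit₂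
      rw [this] at hgu₁; linarith
  · -- minimum nonnegative : g ≥ 0 everywhere
    push_neg at hneg
    have gpos : ∀ x ∈ Icc (0:ℝ) 1, 0 ≤ C x u₂ - Ct x u₂ := by
      intro x hx
      have := ht₂v x hx
      linarith
    by_cases hmax : 0 < C t₁ u₂ - Ct t₁ u₂
    · -- the "hump" case
      have ht₁Ioo : t₁ ∈ Ioo (0:ℝ) 1 := interior t₁ ht₁m (ne_of_gt hmax)
      have hcrit₁ := critmax t₁ ht₁Ioo ht₁max
      have hψt₁ : ψ t₁ u₂ = u₂ := pin t₁ ht₁Ioo hcrit₁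
      have JI : ∀ t, t ∈ Ioo 0 t₁ → t ∈ Ioo (0:ℝ) 1 := fun t ht => ⟨ht.1, ht.2.trans ht₁Ioo.2⟩
      -- the derivative of g does not vanish on (0,t₁)
      have nonzeroL : ∀ t ∈ Ioo 0 t₁, c t u₂ - ct t u₂ ≠ 0 := by
        intro t ht h
        have := uniq t (JI t ht) t₁ ht₁Ioo (by linarith) hcrit₁
        exact absurd this (ne_of_lt ht.2)
      -- a positive sample of the derivative via the mean value theorem on [0,t₁]
      obtain ⟨ξ₀, hξ₀mem, hξ₀⟩ := exists_hasDerivAt_eq_slope (fun s => C s u₂ - Ct s u₂)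
        (fun t => c t u₂ - ct t u₂) ht₁Ioo.1
        (contg.mono (Icc_subset_Icc (le_refl 0) ht₁Ioo.2.le))
        (fun x hx => gd x (JI x hx))
      have hξ₀pos : 0 < c ξ₀ u₂ - ct ξ₀ u₂ := by
        rw [hξ₀, hg0, sub_zero, sub_zero]
        exact div_pos hmax ht₁Ioo.1
      -- Darboux : a nonvanishing everywhere-derivative has constant sign on (0,t₁)
      have darb : ∀ (φ dφ : ℝ → ℝ), (∀ x ∈ Ioo (0:ℝ) 1, HasDerivAt φ (dφ x) x) →
          (∀ t ∈ Ioo 0 t₁, dφ t ≠ 0) →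
          ∀ s ∈ Ioo 0 t₁, ∀ t ∈ Ioo 0 t₁, 0 < dφ s → 0 < dφ t := by
        intro φ dφ hφ hne s hs t ht hspos
        by_contra hneg
        push_neg at hneg
        have htneg : dφ t < 0 := lt_of_le_of_ne hneg (hne t ht)
        rcases lt_trichotomy s t with h | h | h
        · obtain ⟨ζ, hζ, hζ0⟩ := exists_hasDerivWithinAt_eq_of_lt_of_gt h.le
            (fun x hx => (hφ x ⟨lt_of_lt_of_le hs.1 hx.1,
              lt_of_le_of_lt hx.2 (ht.2.trans ht₁Ioo.2)⟩).hasDerivWithinAt)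
            (m := 0) hspos htneg
          exact hne ζ ⟨hs.1.trans hζ.1, hζ.2.trans ht.2⟩ hζ0
        · rw [h] at hspos; linarith
        · obtain ⟨ζ, hζ, hζ0⟩ := exists_hasDerivWithinAt_eq_of_gt_of_lt h.le
            (fun x hx => (hφ x ⟨lt_of_lt_of_le ht.1 hx.1,
              lt_of_le_of_lt hx.2 (hs.2.trans ht₁Ioo.2)⟩).hasDerivWithinAt)
            (m := 0) htneg hspos
          exact hne ζ ⟨ht.1.trans hζ.1, hζ.2.trans hs.2⟩ hζ0
      have leftSign : ∀ t ∈ Ioo 0 t₁, ct t u₂ < c t u₂ := by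
        intro t ht
        have h := darb (fun s => C s u₂ - Ct s u₂) (fun t => c t u₂ - ct t u₂)
          gd nonzeroL ξ₀ hξ₀mem t ht hξ₀pos
        exact sub_pos.mp h
      -- if C(·,u₂) has unit increments on an interval (γ,t₁), we get a contradiction,
      -- since then the left slope of C(·,u₂) at t₁ is 1, while c t₁ u₂ = ct t₁ u₂ < 1.
      have kill : ∀ γ : ℝ, 0 ≤ γ → γ < t₁ →
          (∀ a b : ℝ, γ < a → a ≤ b → b < t₁ → C b u₂ - C a u₂ = b - a) → False := by
        intro γ hγ0 hγt heq
        have heq1 : ∀ s, γ < s → s < t₁ → C t₁ u₂ - C s u₂ = t₁ - s := by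
          intro s hγs hst
          have hs0 : 0 ≤ s := le_trans hγ0 hγs.le
          have hsc : s ∈ Icc (0:ℝ) 1 := ⟨hs0, (hst.trans ht₁Ioo.2).le⟩
          have ht₁c : t₁ ∈ Icc (0:ℝ) 1 := ⟨ht₁Ioo.1.le, ht₁Ioo.2.le⟩
          have hub : C t₁ u₂ - C s u₂ ≤ t₁ - s := (hsecC s t₁ hsc ht₁c hst.le).2
          have hlb : ∀ ε : ℝ, 0 < ε → t₁ - s - ε ≤ C t₁ u₂ - C s u₂ := by
            intro ε hε
            rcases le_or_gt t₁ (s + ε) with h | h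
            · have := (hsecC s t₁ hsc ht₁c hst.le).1
              linarith
            · have hsb : s < t₁ - ε/2 := by linarith
              have hb1 : t₁ - ε/2 < t₁ := by linarith
              have e1 : C (t₁ - ε/2) u₂ - C s u₂ = (t₁ - ε/2) - s :=
                heq s (t₁ - ε/2) hγs hsb.le hb1
              have e2 : 0 ≤ C t₁ u₂ - C (t₁ - ε/2) u₂ :=
                (hsecC (t₁ - ε/2) t₁ ⟨by linarith [ht₁Ioo.1], by linarith [ht₁Ioo.2]⟩
                  ht₁c hb1.le).1
              linarith
          have hge : t₁ - s ≤ C t₁ u₂ - C s u₂ := by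
            by_contra hlt
            push_neg at hlt
            have := hlb ((t₁ - s - (C t₁ u₂ - C s u₂))/2) (by linarith)
            linarith
          linarith
        have hT : Tendsto (slope (fun s => C s u₂) t₁) (𝓝[<] t₁) (𝓝 (c t₁ u₂)) :=
          (hasDerivAt_iff_tendsto_slope.1 (hc u₂ hu₂ t₁ ht₁Ioo)).mono_left
            (nhdsWithin_mono t₁ (fun x hx => Set.mem_compl_singleton_iff.mpr (ne_of_lt hx)))
        have hT2 : Tendsto (slope (fun s => C s u₂) t₁) (𝓝[<] t₁) (𝓝 1) := by
          refine Tendsto.congr' ?_ tendsto_const_nhds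
          filter_upwards [Ioo_mem_nhdsLT_of_mem (⟨hγt, le_refl t₁⟩ : t₁ ∈ Ioc γ t₁)] with x hx
          rw [slope_def_field]
          have hx1 : C t₁ u₂ - C x u₂ = t₁ - x := heq1 x hx.1 hx.2
          have hnum : C x u₂ - C t₁ u₂ = x - t₁ := by linarith
          rw [hnum]
          exact (div_self (sub_ne_zero.mpr (ne_of_lt hx.2))).symm
        have hone : c t₁ u₂ = 1 := tendsto_nhds_unique hT hT2
        have hlt1 : ct t₁ u₂ < 1 := (ctIoo u₂ hu₂ t₁ ht₁Ioo).2
        rw [hcrit₁] at hone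
        linarith
      -- ψ(·,u₂) is nonpositive on (0,t₁)
      have psiNonpos : ∀ t ∈ Ioo 0 t₁, ψ t u₂ ≤ 0 := by
        by_contra hcontra
        push_neg at hcontra
        obtain ⟨γ, hγmem, hγpos⟩ := hcontra
        have c1 : ∀ t, γ < t → t < t₁ → c t u₂ = 1 := by
          intro t hγt htt₁
          have htIoo : t ∈ Ioo (0:ℝ) 1 := ⟨hγmem.1.trans hγt, htt₁.trans ht₁Ioo.2⟩
          have hψpos : 0 < ψ t u₂ := lt_trans hγpos ((hSI u₂ hu₂) (JI γ hγmem) htIoo hγt)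
          have hψlt : ψ t u₂ < u₂ := by
            have h := (hSI u₂ hu₂) htIoo ht₁Ioo htt₁
            simp only at h
            rw [hψt₁] at h
            exact h
          have hcb := cbnd t htIoo
          rcases eq_or_lt_of_le hcb.2 with h1 | h1
          · exact h1
          · exfalso
            have hls := leftSign t ⟨htIoo.1, htt₁⟩
            have hcpos : 0 < c t u₂ := by
              rcases eq_or_lt_of_le hcb.1 with h2 | h2
              · exfalso
                have := (ctIoo u₂ hu₂ t htIoo).1
                rw [← h2] at hls
                linarith
              · exact h2
            have hcIoo : c t u₂ ∈ Ioo (0:ℝ) 1 := ⟨hcpos, h1⟩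
            have hival := (hinv t htIoo (c t u₂) hcIoo).1
            rw [← hψ] at hival
            have hψIoo : ψ t u₂ ∈ Ioo (0:ℝ) 1 := ⟨hψpos, hψlt.trans hu₂.2⟩
            have hstr := ctstrict t htIoo (ψ t u₂) u₂ hψIoo hu₂ hψlt
            rw [hival] at hstr
            linarith
        apply kill γ hγmem.1.le hγmem.2
        intro a b hγa hab hbt
        rcases eq_or_lt_of_le hab with rfl | hab'
        · ring
        · obtain ⟨ξ, hξmem, hξ⟩ := exists_hasDerivAt_eq_slope (fun s => C s u₂)
            (fun t => c t u₂) hab'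
            (contC.mono (Icc_subset_Icc (by linarith [hγmem.1]) (by linarith [ht₁Ioo.2])))
            (fun x hx => hc u₂ hu₂ x ⟨by linarith [hγmem.1, hx.1], by linarith [ht₁Ioo.2, hx.2]⟩)
          have hξ1 : c ξ u₂ = 1 := c1 ξ (hγa.trans hξmem.1) (hξmem.2.trans hbt)
          rw [hξ1] at hξ
          rw [eq_div_iff (by linarith : b - a ≠ 0)] at hξ
          linarith
      -- ct t z never equals c t u₂ for t ∈ (0,t₁)
      have nonvan : ∀ t ∈ Ioo 0 t₁, ∀ z ∈ Ioo (0:ℝ) 1, ct t z ≠ c t u₂ := by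
        intro t ht z hz h
        have hctz := ctIoo z hz t (JI t ht)
        have hcIoo : c t u₂ ∈ Ioo (0:ℝ) 1 := ⟨by rw [← h]; exact hctz.1, by rw [← h]; exact hctz.2⟩
        have hψz : ψ t u₂ = z := by
          rw [hψ, ← h]
          exact (hinv t (JI t ht) z hz).2
        have := psiNonpos t ht
        rw [hψz] at this
        linarith [hz.1]
      -- sign dichotomy of c t u₂ - ct t z in t, for each level z
      have dich : ∀ z ∈ Ioo (0:ℝ) 1,
          (∀ t ∈ Ioo 0 t₁, ct t z < c t u₂) ∨ (∀ t ∈ Ioo 0 t₁, c t u₂ < ct t z) := by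
        intro z hz
        have htref : t₁/2 ∈ Ioo 0 t₁ := ⟨by linarith [ht₁Ioo.1], by linarith [ht₁Ioo.1]⟩
        rcases lt_trichotomy (ct (t₁/2) z) (c (t₁/2) u₂) with h | h | h
        · left
          intro t ht
          have hres := darb (fun s => C s u₂ - Ct s z) (fun x => c x u₂ - ct x z)
            (fun x hx => (hc u₂ hu₂ x hx).sub (hct z hz x hx))
            (fun x hx hc0 => nonvan x hx z hz (by linarith [sub_eq_zero.mp hc0]))
            (t₁/2) htref t ht (by linarith)
          linarith
        · exact absurd h (nonvan (t₁/2) htref z hz)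
        · right
          intro t ht
          have hres := darb (fun s => Ct s z - C s u₂) (fun x => ct x z - c x u₂)
            (fun x hx => (hct z hz x hx).sub (hc u₂ hu₂ x hx))
            (fun x hx hc0 => nonvan x hx z hz (by linarith [sub_eq_zero.mp hc0]))
            (t₁/2) htref t ht (by linarith)
          linarith
      -- the supremum level a₀ of levels z with ct · z < c · u₂ on (0,t₁)
      have hSne : Set.Nonempty {z : ℝ | z ∈ Ioo (0:ℝ) 1 ∧ ∀ t ∈ Ioo 0 t₁, ct t z < c t u₂} :=
        ⟨u₂, ⟨hu₂, leftSign⟩⟩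
      have hSbdd : BddAbove {z : ℝ | z ∈ Ioo (0:ℝ) 1 ∧ ∀ t ∈ Ioo 0 t₁, ct t z < c t u₂} :=
        ⟨1, fun z hz => hz.1.2.le⟩
      have hu₂S : u₂ ∈ {z : ℝ | z ∈ Ioo (0:ℝ) 1 ∧ ∀ t ∈ Ioo 0 t₁, ct t z < c t u₂} :=
        ⟨hu₂, leftSign⟩
      set a₀ := sSup {z : ℝ | z ∈ Ioo (0:ℝ) 1 ∧ ∀ t ∈ Ioo 0 t₁, ct t z < c t u₂} with ha₀def
      have ha₀ge : u₂ ≤ a₀ := le_csSup hSbdd hu₂S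
      have ha₀le : a₀ ≤ 1 := csSup_le hSne (fun z hz => hz.1.2.le)
      have ha₀pos : 0 < a₀ := lt_of_lt_of_le hu₂.1 ha₀ge
      clear_value a₀
      have hlowlt : ∀ z, z ∈ Ioo (0:ℝ) 1 → z < a₀ → ∀ t ∈ Ioo 0 t₁, ct t z < c t u₂ := by
        intro z hz hza t ht
        rw [ha₀def] at hza
        obtain ⟨z', hz'S, hzz'⟩ := exists_lt_of_lt_csSup hSne hza
        exact lt_trans (ctstrict t (JI t ht) z z' hz hz'S.1 hzz') (hz'S.2 t ht)
      -- continuity of sections of Ct at an arbitrary level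
      have contAt : ∀ v : ℝ, v ∈ Icc (0:ℝ) 1 → ContinuousOn (fun t => Ct t v) (Icc (0:ℝ) 1) := by
        intro v hv
        exact contsec (fun s _ => Ct s v)
          (fun a b ha hb hab => hsecg Ct hCtb hCt2 v hv a b ha hb hab)
      rcases eq_or_lt_of_le ha₀le with htop | ha₀lt1
      · -- top case a₀ = 1 : C(·,u₂) has unit increments on (0,t₁)
        apply kill 0 (le_refl 0) ht₁Ioo.1
        intro a b ha hab hbt
        rcases eq_or_lt_of_le hab with rfl | hab'
        · ring
        · have hbtlt : b < 1 := hbt.trans ht₁Ioo.2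
          have hac : a ∈ Icc (0:ℝ) 1 := ⟨ha.le, ((hab.trans_lt hbt).trans ht₁Ioo.2).le⟩
          have hbc : b ∈ Icc (0:ℝ) 1 := ⟨(ha.trans_le hab).le, hbtlt.le⟩
          have haIcc : Icc a b ⊆ Icc (0:ℝ) 1 := Icc_subset_Icc ha.le hbtlt.le
          have key : ∀ z, z ∈ Ioo (0:ℝ) 1 → Ct b z - Ct a z ≤ C b u₂ - C a u₂ := by
            intro z hz
            have hzc : z ∈ Icc (0:ℝ) 1 := ⟨hz.1.le, hz.2.le⟩
            obtain ⟨ξ, hξmem, hξ⟩ := exists_hasDerivAt_eq_slope (fun s => C s u₂ - Ct s z)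
              (fun x => c x u₂ - ct x z) hab'
              ((contC.sub (contAt z hzc)).mono haIcc)
              (fun x hx => (hc u₂ hu₂ x ⟨ha.trans hx.1, (hx.2.trans hbt).trans ht₁Ioo.2⟩).sub
                (hct z hz x ⟨ha.trans hx.1, (hx.2.trans hbt).trans ht₁Ioo.2⟩))
            try simp only at hξ
            have hξt : ξ ∈ Ioo 0 t₁ := ⟨ha.trans hξmem.1, hξmem.2.trans hbt⟩
            have hpos : 0 < c ξ u₂ - ct ξ z := by
              have := hlowlt z hz (by rw [htop]; exact hz.2) ξ hξt
              linarith
            rw [hξ] at hpos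
            have hba : (0:ℝ) < b - a := by linarith
            have hnum := mul_pos hpos hba
            rw [div_mul_cancel₀ _ (ne_of_gt hba)] at hnum
            linarith
          have hup : C b u₂ - C a u₂ ≤ b - a := (hsecC a b hac hbc hab).2
          have hge0 : 0 ≤ C b u₂ - C a u₂ := (hsecC a b hac hbc hab).1
          have hlow2 : b - a ≤ C b u₂ - C a u₂ := by
            by_contra hn
            push_neg at hn
            have hεpos : 0 < b - a - (C b u₂ - C a u₂) := by linarith
            have hεlt : b - a - (C b u₂ - C a u₂) < 1 := by
              have : b - a ≤ 1 := by linarith [hac.1, hbc.2]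
              linarith
            set ε := b - a - (C b u₂ - C a u₂) with hεdef
            have hzmem : (1 - ε/2 : ℝ) ∈ Ioo (0:ℝ) 1 := ⟨by linarith, by linarith⟩
            have h3 := key _ hzmem
            have hz1 : (1 - ε/2 : ℝ) ∈ Icc (0:ℝ) 1 := ⟨by linarith, by linarith⟩
            have honem : (1:ℝ) ∈ Icc (0:ℝ) 1 := ⟨zero_le_one, le_refl 1⟩
            have h4 := (vsecg Ct hCtb hCt2 b hbc (1 - ε/2) 1 hz1 honem (by linarith)).2
            have h5 := (vsecg Ct hCtb hCt2 a hac (1 - ε/2) 1 hz1 honem (by linarith)).1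
            have e1 : Ct b 1 = b := (hCtb b hbc).2.2.1
            have e2 : Ct a 1 = a := (hCtb a hac).2.2.1
            rw [e1] at h4
            rw [e2] at h5
            linarith
          linarith
      · -- main case : a₀ ∈ (0,1)
        have ha₀Ioo : a₀ ∈ Ioo (0:ℝ) 1 := ⟨ha₀pos, ha₀lt1⟩
        have ha₀c : a₀ ∈ Icc (0:ℝ) 1 := ⟨ha₀pos.le, ha₀lt1.le⟩
        have hαβ : t₁/3 < t₁/2 := by linarith [ht₁Ioo.1]
        have hαc : t₁/3 ∈ Icc (0:ℝ) 1 := ⟨by linarith [ht₁Ioo.1], by linarith [ht₁Ioo.2]⟩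
        have hβc : t₁/2 ∈ Icc (0:ℝ) 1 := ⟨by linarith [ht₁Ioo.1], by linarith [ht₁Ioo.2]⟩
        have hsub : Icc (t₁/3) (t₁/2) ⊆ Icc (0:ℝ) 1 :=
          Icc_subset_Icc (by linarith [ht₁Ioo.1]) (by linarith [ht₁Ioo.2])
        have hIox : ∀ x ∈ Ioo (t₁/3) (t₁/2), x ∈ Ioo (0:ℝ) 1 :=
          fun x hx => ⟨lt_trans (by linarith [ht₁Ioo.1]) hx.1, by linarith [hx.2, ht₁Ioo.2]⟩
        have hIot : ∀ x ∈ Ioo (t₁/3) (t₁/2), x ∈ Ioo 0 t₁ :=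
          fun x hx => ⟨lt_trans (by linarith [ht₁Ioo.1]) hx.1, by linarith [hx.2, ht₁Ioo.1]⟩
        have hβα : (0:ℝ) < t₁/2 - t₁/3 := by linarith [ht₁Ioo.1]
        rcases dich a₀ ha₀Ioo with hlow | hhigh
        · -- ct · a₀ < c · u₂ on (0,t₁) : pick z slightly above a₀
          obtain ⟨ξ, hξmem, hξ⟩ := exists_hasDerivAt_eq_slope (fun s => C s u₂ - Ct s a₀)
            (fun x => c x u₂ - ct x a₀) hαβ
            ((contC.sub (contAt a₀ ha₀c)).mono hsub)
            (fun x hx => (hc u₂ hu₂ x (hIox x hx)).sub (hct a₀ ha₀Ioo x (hIox x hx)))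
          try simp only at hξ
          have hdpos : 0 < c ξ u₂ - ct ξ a₀ := by
            have := hlow ξ (hIot ξ hξmem)
            linarith
          rw [hξ] at hdpos
          have hPpos : 0 < (C (t₁/2) u₂ - Ct (t₁/2) a₀) - (C (t₁/3) u₂ - Ct (t₁/3) a₀) := by
            have := mul_pos hdpos hβα
            rw [div_mul_cancel₀ _ (ne_of_gt hβα)] at this
            linarith
          set P := (C (t₁/2) u₂ - Ct (t₁/2) a₀) - (C (t₁/3) u₂ - Ct (t₁/3) a₀) with hPdef
          clear_value P
          have hzle : min (a₀ + P/2) ((a₀ + 1)/2) ≤ a₀ + P/2 := min_le_left _ _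
          have hzgt : a₀ < min (a₀ + P/2) ((a₀ + 1)/2) := lt_min (by linarith [hPpos]) (by linarith [ha₀lt1])
          have hzlt1 : min (a₀ + P/2) ((a₀ + 1)/2) < 1 :=
            lt_of_le_of_lt (min_le_right _ _) (by linarith)
          set z := min (a₀ + P/2) ((a₀ + 1)/2) with hzdef
          clear_value z
          have hzIoo : z ∈ Ioo (0:ℝ) 1 := ⟨lt_trans ha₀pos hzgt, hzlt1⟩
          have hzc : z ∈ Icc (0:ℝ) 1 := ⟨(lt_trans ha₀pos hzgt).le, hzlt1.le⟩
          have hzhigh : ∀ t ∈ Ioo 0 t₁, c t u₂ < ct t z := by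
            rcases dich z hzIoo with hl | hh
            · exfalso
              have h := le_csSup hSbdd (⟨hzIoo, hl⟩ :
                z ∈ {z : ℝ | z ∈ Ioo (0:ℝ) 1 ∧ ∀ t ∈ Ioo 0 t₁, ct t z < c t u₂})
              rw [← ha₀def] at h
              linarith
            · exact hh
          obtain ⟨ξ', hξ'mem, hξ'⟩ := exists_hasDerivAt_eq_slope (fun s => Ct s z - C s u₂)
            (fun x => ct x z - c x u₂) hαβ
            (((contAt z hzc).sub contC).mono hsub)
            (fun x hx => (hct z hzIoo x (hIox x hx)).sub (hc u₂ hu₂ x (hIox x hx)))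
          try simp only at hξ'
          have hdpos' : 0 < ct ξ' z - c ξ' u₂ := by
            have := hzhigh ξ' (hIot ξ' hξ'mem)
            linarith
          rw [hξ'] at hdpos'
          have hQpos : 0 < (Ct (t₁/2) z - C (t₁/2) u₂) - (Ct (t₁/3) z - C (t₁/3) u₂) := by
            have := mul_pos hdpos' hβα
            rw [div_mul_cancel₀ _ (ne_of_gt hβα)] at this
            linarith
          have hWub := (vsecg Ct hCtb hCt2 (t₁/2) hβc a₀ z ha₀c hzc hzgt.le).2
          have hWlb := (vsecg Ct hCtb hCt2 (t₁/3) hαc a₀ z ha₀c hzc hzgt.le).1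
          linarith
        · -- c · u₂ < ct · a₀ on (0,t₁) : pick z slightly below a₀
          obtain ⟨ξ, hξmem, hξ⟩ := exists_hasDerivAt_eq_slope (fun s => Ct s a₀ - C s u₂)
            (fun x => ct x a₀ - c x u₂) hαβ
            (((contAt a₀ ha₀c).sub contC).mono hsub)
            (fun x hx => (hct a₀ ha₀Ioo x (hIox x hx)).sub (hc u₂ hu₂ x (hIox x hx)))
          try simp only at hξ
          have hdpos : 0 < ct ξ a₀ - c ξ u₂ := by
            have := hhigh ξ (hIot ξ hξmem)
            linarith
          rw [hξ] at hdpos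
          have hPpos : 0 < (Ct (t₁/2) a₀ - C (t₁/2) u₂) - (Ct (t₁/3) a₀ - C (t₁/3) u₂) := by
            have := mul_pos hdpos hβα
            rw [div_mul_cancel₀ _ (ne_of_gt hβα)] at this
            linarith
          set P := (Ct (t₁/2) a₀ - C (t₁/2) u₂) - (Ct (t₁/3) a₀ - C (t₁/3) u₂) with hPdef
          clear_value P
          have hzge : a₀ - P/2 ≤ max (a₀ - P/2) (a₀/2) := le_max_left _ _
          have hzlt : max (a₀ - P/2) (a₀/2) < a₀ := max_lt (by linarith) (by linarith)
          have hzpos : 0 < max (a₀ - P/2) (a₀/2) :=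
            lt_of_lt_of_le (by linarith : (0:ℝ) < a₀/2) (le_max_right _ _)
          set z := max (a₀ - P/2) (a₀/2) with hzdef
          clear_value z
          have hzIoo : z ∈ Ioo (0:ℝ) 1 := ⟨hzpos, hzlt.trans ha₀lt1⟩
          have hzc : z ∈ Icc (0:ℝ) 1 := ⟨hzpos.le, (hzlt.trans ha₀lt1).le⟩
          have hzlow : ∀ t ∈ Ioo 0 t₁, ct t z < c t u₂ := hlowlt z hzIoo hzlt
          obtain ⟨ξ', hξ'mem, hξ'⟩ := exists_hasDerivAt_eq_slope (fun s => C s u₂ - Ct s z)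
            (fun x => c x u₂ - ct x z) hαβ
            ((contC.sub (contAt z hzc)).mono hsub)
            (fun x hx => (hc u₂ hu₂ x (hIox x hx)).sub (hct z hzIoo x (hIox x hx)))
          try simp only at hξ'
          have hdpos' : 0 < c ξ' u₂ - ct ξ' z := by
            have := hzlow ξ' (hIot ξ' hξ'mem)
            linarith
          rw [hξ'] at hdpos'
          have hQpos : 0 < (C (t₁/2) u₂ - Ct (t₁/2) z) - (C (t₁/3) u₂ - Ct (t₁/3) z) := by
            have := mul_pos hdpos' hβα
            rw [div_mul_cancel₀ _ (ne_of_gt hβα)] at this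
            linarith
          have hWub := (vsecg Ct hCtb hCt2 (t₁/2) hβc z a₀ hzc ha₀c hzlt.le).2
          have hWlb := (vsecg Ct hCtb hCt2 (t₁/3) hαc z a₀ hzc ha₀c hzlt.le).1
          linarith
    · -- g identically zero : contradiction with strict monotonicity
      push_neg at hmax
      have gzero : ∀ x ∈ Icc (0:ℝ) 1, C x u₂ - Ct x u₂ = 0 := by
        intro x hx
        have h1 := ht₁v x hx
        have h2 := gpos x hx
        linarith
      have hzero : ∀ t ∈ Ioo (0:ℝ) 1, c t u₂ = ct t u₂ := by
        intro t ht
        have heq : (fun s => C s u₂ - Ct s u₂) =ᶠ[nhds t] (fun _ => (0:ℝ)) := by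
          filter_upwards [Ioo_mem_nhds ht.1 ht.2] with x hx
          exact gzero x (Ioo_subset_Icc_self hx)
        have h1 : HasDerivAt (fun s => C s u₂ - Ct s u₂) 0 t :=
          (hasDerivAt_const t (0:ℝ)).congr_of_eventuallyEq heq
        have := (gd t ht).unique h1
        linarith
      have h3 : (1/3 : ℝ) ∈ Ioo (0:ℝ) 1 := by norm_num
      have h2 : (1/2 : ℝ) ∈ Ioo (0:ℝ) 1 := by norm_num
      have := uniq (1/3) h3 (1/2) h2 (hzero _ h3) (hzero _ h2)
      norm_num at this
end

section
/- Fix q ∈ (0,1) and t ∈ (0,1). Define t* = q + (1−q)t and s† = q·t. Then t* > t, s† < t, and the following observational-equivalence equations hold with the independence copula Π(u,v) = uv and the comonotone copula M(u,v) = min(u,v): (i) t − Π(t,q) = t* − M(t*, q); (ii) Π(t, q) = M(s†, q). -/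
/-- Fix `q, t ∈ (0,1)` and set `t* = q + (1−q)t`, `s† = q·t`. Then `t* > t`,
`s† < t`, and with the independence copula `Π(u,v) = uv` and comonotone copula
`M(u,v) = min(u,v)`: (i) `t − Π(t,q) = t* − M(t*,q)`; (ii) `Π(t,q) = M(s†,q)`. -/
theorem matching_independence_comonotone
    (q t : ℝ) (hq : q ∈ Set.Ioo (0:ℝ) 1) (ht : t ∈ Set.Ioo (0:ℝ) 1)
    (tstar sdag : ℝ) (htstar : tstar = q + (1 - q) * t) (hsdag : sdag = q * t) :
    t < tstar ∧ sdag < t ∧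
    t - t * q = tstar - min tstar q ∧
    t * q = min sdag q := by
  obtain ⟨hq0, hq1⟩ := hq
  obtain ⟨ht0, ht1⟩ := ht
  have h1 : t < tstar := by nlinarith
  have h2 : sdag < t := by nlinarith
  have hmin1 : min tstar q = q := min_eq_right (by nlinarith)
  have hmin2 : min sdag q = sdag := min_eq_left (by nlinarith)
  exact ⟨h1, h2, by rw [hmin1, htstar]; ring, by rw [hmin2, hsdag]; ring⟩
end
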